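/- Let n ≥ 3, k ∈ {1,...,n−1} with k ≠ n/2, and let μ = 4·sin²(kπ/n). If G' is obtained from a graph G containing an induced path of n internal vertices, each of degree 2 in G, connecting vertices v and u, by replacing this path by a single edge {v,u}, then the multiplicity of μ as a Laplacian eigenvalue of G equals the multiplicity of μ as a Laplacian eigenvalue of G'. -/

import Mathlib

open Matrix SimpleGraph Real

noncomputable def mult {m : Type*} [Fintype m] [DecidableEq m]
    (M : Matrix m m ℝ) (μ : ℝ) : ℕ :=
  Module.finrank ℝ (Module.End.eigenspace (Matrix.toLin' M) μ)

lemma trig_rec (α β θ : ℝ) (t : ℕ) :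
    (α * Real.cos (t * θ) + β * Real.sin (t * θ))
      + (α * Real.cos ((t + 2) * θ) + β * Real.sin ((t + 2) * θ))
    = 2 * Real.cos θ * (α * Real.cos ((t + 1) * θ) + β * Real.sin ((t + 1) * θ)) := by
  have h2 : ((t : ℝ) + 2) * θ = ((t : ℝ) + 1) * θ + θ := by ring
  have h0 : (t : ℝ) * θ = ((t : ℝ) + 1) * θ - θ := by ring
  rw [h2, h0, Real.cos_add, Real.sin_add, Real.cos_sub, Real.sin_sub]; ring

lemma rec_formula (θ : ℝ) (hs : Real.sin θ ≠ 0) (n : ℕ) (q : ℕ → ℝ)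
    (hrec : ∀ j < n, q j + q (j + 2) = 2 * Real.cos θ * q (j + 1)) :
    ∀ t ≤ n + 1, q t = q 0 * Real.cos (t * θ)
      + ((q 1 - q 0 * Real.cos θ) / Real.sin θ) * Real.sin (t * θ) := by
  intro t
  induction t using Nat.strong_induction_on with
  | _ t ih =>
    rcases t with _ | (_ | s)
    · intro _; simp
    · intro _
      norm_num
      field_simp
      ring
    · intro h
      have h1 := ih s (by omega) (by omega)
      have h2 := ih (s + 1) (by omega) (by omega)
      have h3 := hrec s (by omega)
      have h4 := trig_rec (q 0) ((q 1 - q 0 * Real.cos θ) / Real.sin θ) θ s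
      rw [h1, h2] at h3
      push_cast at h3 h4 ⊢
      ring_nf at h3 h4 ⊢
      linarith [h3, h4]

lemma lap_apply {V : Type*} [Fintype V] [DecidableEq V] (H : SimpleGraph V) [DecidableRel H.Adj]
    (x : V → ℝ) (w : V) :
    (H.lapMatrix ℝ *ᵥ x) w = ∑ b, (if H.Adj w b then x w - x b else 0) := by
  rw [SimpleGraph.lapMatrix_mulVec_apply]
  have h1 : ∑ u ∈ H.neighborFinset w, x u = ∑ b, if H.Adj w b then x b else 0 := by
    rw [SimpleGraph.neighborFinset_eq_filter, Finset.sum_filter]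
  have h2 : (H.degree w : ℝ) = ∑ b, if H.Adj w b then (1:ℝ) else 0 := by
    rw [SimpleGraph.degree, SimpleGraph.neighborFinset_eq_filter]
    simp [Finset.sum_boole]
  rw [h1, h2, Finset.sum_mul, ← Finset.sum_sub_distrib]
  refine Finset.sum_congr rfl fun b _ => ?_
  split <;> simp

lemma ite_or_split (P Q : Prop) [Decidable P] [Decidable Q] (h : ¬(P ∧ Q)) (r : ℝ) :
    (if P ∨ Q then r else 0) = (if P then r else 0) + (if Q then r else 0) := by
  by_cases hP : P <;> by_cases hQ : Q <;> simp [hP, hQ]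
  exact absurd ⟨hP, hQ⟩ h

lemma fin_sum_ite {n : ℕ} (t : ℕ) (ht : t < n) (f : Fin n → ℝ) :
    (∑ i : Fin n, if (i : ℕ) = t then f i else 0) = f ⟨t, ht⟩ := by
  have he : ∀ i : Fin n, (if (i:ℕ) = t then f i else 0) = (if i = (⟨t, ht⟩ : Fin n) then f i else 0) := by
    intro i
    apply if_congr _ rfl rfl
    simp [Fin.ext_iff]
  simp only [he, Finset.sum_ite_eq', Finset.mem_univ, if_true]

lemma fin_sum_ite_zero {n : ℕ} (t : ℕ) (ht : n ≤ t) (f : Fin n → ℝ) :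
    (∑ i : Fin n, if (i : ℕ) = t then f i else 0) = 0 :=
  Finset.sum_eq_zero fun i _ => if_neg (by have := i.isLt; omega)

lemma sin_theta_ne {n k : ℕ} (hn : 3 ≤ n) (hk1 : 1 ≤ k) (hkn : k ≤ n - 1) (hk2 : 2 * k ≠ n) :
    Real.sin (2 * k * Real.pi / n) ≠ 0 := by
  intro h
  rw [Real.sin_eq_zero_iff] at h
  obtain ⟨z, hz⟩ := h
  have hπ : (0:ℝ) < Real.pi := Real.pi_pos
  have hn0 : (0:ℝ) < (n:ℝ) := by exact_mod_cast (by omega : 0 < n)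
  have h4 : ((z:ℝ) * n) * Real.pi = ((2 * k : ℕ) : ℝ) * Real.pi := by
    push_cast
    field_simp at hz
    rw [hz]
  have h5 : (z:ℝ) * (n:ℝ) = ((2 * k : ℕ) : ℝ) := mul_right_cancel₀ Real.pi_ne_zero h4
  have h6 : z * (n:ℤ) = ((2 * k : ℕ) : ℤ) := by exact_mod_cast h5
  have hzpos : 0 < z := by nlinarith [h6, (by omega : (1:ℤ) ≤ (2*k:ℕ)), (by omega : (3:ℤ) ≤ (n:ℕ))]
  have hzlt : z < 2 := by nlinarith [h6, (by omega : ((2*k:ℕ):ℤ) < 2 * (n:ℕ)), (by omega : (3:ℤ) ≤ (n:ℕ))]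
  have hz1 : z = 1 := by omega
  rw [hz1, one_mul] at h6
  omega

lemma mu_eq {n k : ℕ} (hn : 3 ≤ n) :
    4 * Real.sin (k * Real.pi / n) ^ 2 = 2 - 2 * Real.cos (2 * k * Real.pi / n) := by
  have h1 : (2 * k * Real.pi / n : ℝ) = 2 * (k * Real.pi / n) := by ring
  rw [h1, Real.cos_two_mul]
  have h2 := Real.sin_sq_add_cos_sq ((k : ℝ) * Real.pi / n)
  linarith

def qseq {m n : ℕ} (u v : Fin m) (x : Fin m ⊕ Fin n → ℝ) : ℕ → ℝ := fun t =>
  if h : 1 ≤ t ∧ t ≤ n then x (Sum.inr ⟨t - 1, by omega⟩)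
  else if t = 0 then x (Sum.inl v) else x (Sum.inl u)

lemma qseq_zero {m n : ℕ} (u v : Fin m) (x : Fin m ⊕ Fin n → ℝ) :
    qseq u v x 0 = x (Sum.inl v) := by simp [qseq]

lemma qseq_succ {m n : ℕ} (u v : Fin m) (x : Fin m ⊕ Fin n → ℝ) (j : Fin n) :
    qseq u v x ((j : ℕ) + 1) = x (Sum.inr j) := by
  have hj := j.isLt
  rw [qseq, dif_pos ⟨by omega, by omega⟩]
  congr 1

lemma qseq_last {m n : ℕ} (u v : Fin m) (x : Fin m ⊕ Fin n → ℝ) :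
    qseq u v x (n + 1) = x (Sum.inl u) := by
  rw [qseq, dif_neg (by omega)]
  simp

/-- Replacing an induced path of `n` internal vertices of degree `2` (the `Fin n` part,
attached to `v` at one end and `u` at the other) by a single edge `{v, u}` does not change
the multiplicity of the Laplacian eigenvalue `4 sin²(kπ/n)`, for `1 ≤ k ≤ n-1`, `k ≠ n/2`. -/
theorem stmt17 {m n : ℕ} (hn : 3 ≤ n) (k : ℕ) (hk1 : 1 ≤ k) (hkn : k ≤ n - 1)
    (hk2 : 2 * k ≠ n)
    (G : SimpleGraph (Fin m ⊕ Fin n)) [DecidableRel G.Adj]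
    (u v : Fin m) (huv : u ≠ v) (hnadj : ¬ G.Adj (Sum.inl u) (Sum.inl v))
    (hpath : ∀ i j : Fin n, G.Adj (Sum.inr i) (Sum.inr j) ↔
      ((i : ℕ) + 1 = j ∨ (j : ℕ) + 1 = i))
    (hcross : ∀ (a : Fin m) (i : Fin n), G.Adj (Sum.inl a) (Sum.inr i) ↔
      ((a = v ∧ (i : ℕ) = 0) ∨ (a = u ∧ (i : ℕ) = n - 1)))
    (G' : SimpleGraph (Fin m)) [DecidableRel G'.Adj]
    (hG' : ∀ a b : Fin m, G'.Adj a b ↔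
      (G.Adj (Sum.inl a) (Sum.inl b) ∨ (a = v ∧ b = u) ∨ (a = u ∧ b = v))) :
    mult (G.lapMatrix ℝ) (4 * Real.sin (k * Real.pi / n) ^ 2) =
      mult (G'.lapMatrix ℝ) (4 * Real.sin (k * Real.pi / n) ^ 2) := by
  classical
  set θ : ℝ := 2 * k * Real.pi / n with hθ
  set μ : ℝ := 4 * Real.sin (k * Real.pi / n) ^ 2 with hμdef
  have hμ : μ = 2 - 2 * Real.cos θ := mu_eq hn
  have hs : Real.sin θ ≠ 0 := sin_theta_ne hn hk1 hkn hk2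
  have hnn : (n:ℝ) ≠ 0 := by exact_mod_cast (by omega : n ≠ 0)
  have hnθ : (n:ℝ) * θ = (k:ℝ) * (2 * Real.pi) := by rw [hθ]; field_simp
  have hcosn : Real.cos ((n:ℕ) * θ) = 1 := by rw [hnθ]; exact Real.cos_nat_mul_two_pi k
  have hsinn : Real.sin ((n:ℕ) * θ) = 0 := by
    rw [hnθ, show (k:ℝ) * (2*Real.pi) = ((2*k : ℕ):ℝ) * Real.pi by push_cast; ring]
    exact Real.sin_nat_mul_pi (2*k)
  have hcosn1 : Real.cos (((n+1 : ℕ):ℝ) * θ) = Real.cos θ := by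
    rw [show ((n+1:ℕ):ℝ) * θ = (n:ℝ)*θ + θ by push_cast; ring, Real.cos_add, hcosn, hsinn]; ring
  have hsinn1 : Real.sin (((n+1:ℕ):ℝ) * θ) = Real.sin θ := by
    rw [show ((n+1:ℕ):ℝ) * θ = (n:ℝ)*θ + θ by push_cast; ring, Real.sin_add, hcosn, hsinn]; ring
  -- basic qseq values
  have hqmid : ∀ (x : Fin m ⊕ Fin n → ℝ) (t : ℕ) (h1 : 1 ≤ t) (h2 : t ≤ n),
      qseq u v x t = x (Sum.inr ⟨t-1, by omega⟩) := by
    intro x t h1 h2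
    simp only [qseq]
    rw [dif_pos ⟨h1, h2⟩]
  have hq1 : ∀ x : Fin m ⊕ Fin n → ℝ, qseq u v x 1 = x (Sum.inr (⟨0, by omega⟩ : Fin n)) := by
    intro x
    have := qseq_succ u v x ⟨0, by omega⟩
    simpa using this
  have hqn : ∀ x : Fin m ⊕ Fin n → ℝ, qseq u v x n = x (Sum.inr (⟨n-1, by omega⟩ : Fin n)) :=
    fun x => hqmid x n (by omega) le_rfl
  -- row computation for G, inl vertices
  have lapG_inl : ∀ (x : Fin m ⊕ Fin n → ℝ) (a : Fin m),
      (G.lapMatrix ℝ *ᵥ x) (Sum.inl a)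
        = (∑ b : Fin m, if G.Adj (Sum.inl a) (Sum.inl b) then x (Sum.inl a) - x (Sum.inl b) else 0)
          + ((if a = v then x (Sum.inl a) - qseq u v x 1 else 0)
          + (if a = u then x (Sum.inl a) - qseq u v x n else 0)) := by
    intro x a
    rw [lap_apply, Fintype.sum_sum_type]
    congr 1
    have h1 : ∀ i : Fin n, (if G.Adj (Sum.inl a) (Sum.inr i) then x (Sum.inl a) - x (Sum.inr i) else 0)
        = (if a = v ∧ (i:ℕ) = 0 then x (Sum.inl a) - x (Sum.inr i) else 0)
          + (if a = u ∧ (i:ℕ) = n - 1 then x (Sum.inl a) - x (Sum.inr i) else 0) := by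
      intro i
      rw [if_congr (hcross a i) rfl rfl]
      refine ite_or_split _ _ ?_ _
      rintro ⟨⟨rfl, h0⟩, ⟨hu2, h1⟩⟩
      exact (huv (hu2.symm.trans rfl)).elim
    rw [Finset.sum_congr rfl fun i _ => h1 i, Finset.sum_add_distrib]
    congr 1
    · by_cases ha : a = v
      · subst ha
        simp only [if_pos rfl, true_and]
        rw [fin_sum_ite 0 (show 0 < n by omega), hq1]
        simp
      · simp [ha]
    · by_cases ha : a = u
      · subst ha
        simp only [if_pos rfl, true_and]
        rw [fin_sum_ite (n-1) (show n-1 < n by omega), hqn]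
        simp
      · simp [ha]
  have hxcongr : ∀ (x : Fin m ⊕ Fin n → ℝ) (a b : ℕ) (ha : a < n) (hb : b < n), a = b →
      x (Sum.inr ⟨a, ha⟩) = x (Sum.inr ⟨b, hb⟩) := by
    intro x a b ha hb h
    subst h
    rfl
  -- row computation for G, inr vertices
  have lapG_inr : ∀ (x : Fin m ⊕ Fin n → ℝ) (j : Fin n),
      (G.lapMatrix ℝ *ᵥ x) (Sum.inr j)
        = 2 * qseq u v x ((j:ℕ)+1) - qseq u v x (j:ℕ) - qseq u v x ((j:ℕ)+2) := by
    intro x j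
    have hjlt := j.isLt
    rw [lap_apply, Fintype.sum_sum_type]
    have hxj : x (Sum.inr j) = qseq u v x ((j:ℕ)+1) := (qseq_succ u v x j).symm
    by_cases hj0 : (j:ℕ) = 0
    · -- first vertex of the path
      have hc : ∀ a' : Fin m, (if G.Adj (Sum.inr j) (Sum.inl a') then x (Sum.inr j) - x (Sum.inl a') else 0)
          = (if a' = v then x (Sum.inr j) - x (Sum.inl a') else 0) := by
        intro a'
        refine if_congr ?_ rfl rfl
        rw [G.adj_comm, hcross]
        constructor
        · rintro (⟨h, _⟩ | ⟨_, h2⟩)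
          · exact h
          · omega
        · intro h; exact Or.inl ⟨h, hj0⟩
      have hp : ∀ i : Fin n, (if G.Adj (Sum.inr j) (Sum.inr i) then x (Sum.inr j) - x (Sum.inr i) else 0)
          = (if (i:ℕ) = 1 then x (Sum.inr j) - x (Sum.inr i) else 0) := by
        intro i
        refine if_congr ?_ rfl rfl
        rw [hpath]
        have := i.isLt
        omega
      rw [Finset.sum_congr rfl fun a' _ => hc a', Finset.sum_congr rfl fun i _ => hp i,
        fin_sum_ite 1 (show 1 < n by omega), Finset.sum_ite_eq' Finset.univ v
          (fun a' => x (Sum.inr j) - x (Sum.inl a'))]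
      rw [hj0, hxj, hj0]
      have e0 : qseq u v x 0 = x (Sum.inl v) := qseq_zero u v x
      have e2 : qseq u v x (0+2) = x (Sum.inr ⟨1, by omega⟩) := by
        rw [hqmid x 2 (by omega) (by omega)]
      rw [e0, e2]
      simp only [Finset.mem_univ, if_true]
      ring
    · by_cases hjl : (j:ℕ) = n - 1
      · -- last vertex of the path
        have hc : ∀ a' : Fin m, (if G.Adj (Sum.inr j) (Sum.inl a') then x (Sum.inr j) - x (Sum.inl a') else 0)
            = (if a' = u then x (Sum.inr j) - x (Sum.inl a') else 0) := by
          intro a'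
          refine if_congr ?_ rfl rfl
          rw [G.adj_comm, hcross]
          constructor
          · rintro (⟨_, h2⟩ | ⟨h, _⟩)
            · omega
            · exact h
          · intro h; exact Or.inr ⟨h, hjl⟩
        have hp : ∀ i : Fin n, (if G.Adj (Sum.inr j) (Sum.inr i) then x (Sum.inr j) - x (Sum.inr i) else 0)
            = (if (i:ℕ) = n - 2 then x (Sum.inr j) - x (Sum.inr i) else 0) := by
          intro i
          refine if_congr ?_ rfl rfl
          rw [hpath]
          have := i.isLt
          omega
        rw [Finset.sum_congr rfl fun a' _ => hc a', Finset.sum_congr rfl fun i _ => hp i,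
          fin_sum_ite (n-2) (show n-2 < n by omega), Finset.sum_ite_eq' Finset.univ u
            (fun a' => x (Sum.inr j) - x (Sum.inl a'))]
        rw [hjl, hxj, hjl]
        have e0 : qseq u v x (n-1) = x (Sum.inr ⟨n-2, by omega⟩) :=
          (hqmid x (n-1) (by omega) (by omega)).trans
            (hxcongr x _ _ (by omega) (by omega) (by omega))
        have e2 : qseq u v x (n-1+2) = x (Sum.inl u) := by
          rw [show n-1+2 = n+1 by omega, qseq_last]
        rw [e0, e2, show n-1+1 = n by omega]
        simp only [Finset.mem_univ, if_true]
        ring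
      · -- middle vertex of the path
        have hc : ∀ a' : Fin m, (if G.Adj (Sum.inr j) (Sum.inl a') then x (Sum.inr j) - x (Sum.inl a') else 0)
            = 0 := by
          intro a'
          rw [if_neg]
          rw [G.adj_comm, hcross]
          rintro (⟨_, h2⟩ | ⟨_, h2⟩) <;> omega
        have hp : ∀ i : Fin n, (if G.Adj (Sum.inr j) (Sum.inr i) then x (Sum.inr j) - x (Sum.inr i) else 0)
            = (if (i:ℕ) = (j:ℕ)+1 then x (Sum.inr j) - x (Sum.inr i) else 0)
              + (if (i:ℕ) = (j:ℕ)-1 then x (Sum.inr j) - x (Sum.inr i) else 0) := by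
          intro i
          rw [if_congr (show G.Adj (Sum.inr j) (Sum.inr i) ↔ ((i:ℕ) = (j:ℕ)+1 ∨ (i:ℕ) = (j:ℕ)-1)
            by rw [hpath]; have := i.isLt; omega) rfl rfl]
          exact ite_or_split _ _ (by omega) _
        rw [Finset.sum_congr rfl fun a' _ => hc a', Finset.sum_congr rfl fun i _ => hp i,
          Finset.sum_add_distrib, fin_sum_ite ((j:ℕ)+1) (show (j:ℕ)+1 < n by omega),
          fin_sum_ite ((j:ℕ)-1) (show (j:ℕ)-1 < n by omega), Finset.sum_const_zero]
        have e0 : qseq u v x (j:ℕ) = x (Sum.inr ⟨(j:ℕ)-1, by omega⟩) := by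
          rw [hqmid x (j:ℕ) (by omega) (by omega)]
        have e2 : qseq u v x ((j:ℕ)+2) = x (Sum.inr ⟨(j:ℕ)+1, by omega⟩) :=
          (hqmid x ((j:ℕ)+2) (by omega) (by omega)).trans
            (hxcongr x _ _ (by omega) (by omega) (by omega))
        rw [hxj, e0, e2]
        ring
  -- row computation for G'
  have lapG'_row : ∀ (y : Fin m → ℝ) (a : Fin m),
      (G'.lapMatrix ℝ *ᵥ y) a
        = (∑ b : Fin m, if G.Adj (Sum.inl a) (Sum.inl b) then y a - y b else 0)
          + ((if a = v then y a - y u else 0) + (if a = u then y a - y v else 0)) := by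
    intro y a
    rw [lap_apply]
    have h1 : ∀ b : Fin m, (if G'.Adj a b then y a - y b else 0)
        = (if G.Adj (Sum.inl a) (Sum.inl b) then y a - y b else 0)
          + ((if a = v ∧ b = u then y a - y b else 0) + (if a = u ∧ b = v then y a - y b else 0)) := by
      intro b
      rw [if_congr (hG' a b) rfl rfl]
      rw [ite_or_split _ _ ?h1 _, ite_or_split _ _ ?h2 _]
      case h1 =>
        rintro ⟨hadj, (⟨rfl, rfl⟩ | ⟨rfl, rfl⟩)⟩
        · exact hnadj hadj.symm
        · exact hnadj hadj
      case h2 =>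
        rintro ⟨⟨rfl, rfl⟩, ⟨h, _⟩⟩
        exact huv h.symm
    rw [Finset.sum_congr rfl fun b _ => h1 b, Finset.sum_add_distrib, Finset.sum_add_distrib]
    congr 1
    congr 1
    · by_cases ha : a = v
      · subst ha
        simp
      · simp [ha]
    · by_cases ha : a = u
      · subst ha
        simp
      · simp [ha]
  -- eigen characterization for G
  have keyG : ∀ x : Fin m ⊕ Fin n → ℝ,
      (G.lapMatrix ℝ *ᵥ x = μ • x) ↔
        ((∀ a : Fin m, (∑ b : Fin m, if G.Adj (Sum.inl a) (Sum.inl b) then x (Sum.inl a) - x (Sum.inl b) else 0)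
            + ((if a = v then x (Sum.inl a) - qseq u v x 1 else 0)
            + (if a = u then x (Sum.inl a) - qseq u v x n else 0)) = μ * x (Sum.inl a))
         ∧ (∀ t < n, qseq u v x t + qseq u v x (t+2) = 2 * Real.cos θ * qseq u v x (t+1))) := by
    intro x
    rw [funext_iff, Sum.forall]
    apply and_congr
    · apply forall_congr'
      intro a
      rw [lapG_inl, Pi.smul_apply, smul_eq_mul]
    · constructor
      · intro h t ht
        have h2 := h ⟨t, ht⟩
        rw [lapG_inr, Pi.smul_apply, smul_eq_mul] at h2
        have hx : x (Sum.inr ⟨t, ht⟩) = qseq u v x (t+1) := (qseq_succ u v x ⟨t, ht⟩).symm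
        rw [hx] at h2
        rw [hμ] at h2
        simp only [Fin.val_mk] at h2
        linarith [h2]
      · intro h j
        rw [lapG_inr, Pi.smul_apply, smul_eq_mul]
        have h2 := h (j:ℕ) j.isLt
        rw [hμ]
        rw [show x (Sum.inr j) = qseq u v x ((j:ℕ)+1) from (qseq_succ u v x j).symm]
        linarith [h2]
  -- eigen characterization for G'
  have keyG' : ∀ y : Fin m → ℝ,
      (G'.lapMatrix ℝ *ᵥ y = μ • y) ↔
        (∀ a : Fin m, (∑ b : Fin m, if G.Adj (Sum.inl a) (Sum.inl b) then y a - y b else 0)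
            + ((if a = v then y a - y u else 0) + (if a = u then y a - y v else 0)) = μ * y a) := by
    intro y
    rw [funext_iff]
    apply forall_congr'
    intro a
    rw [lapG'_row, Pi.smul_apply, smul_eq_mul]
  -- solution formula for eigenvectors of G
  have q_formula : ∀ x : Fin m ⊕ Fin n → ℝ, (G.lapMatrix ℝ *ᵥ x = μ • x) →
      ∀ t ≤ n + 1, qseq u v x t = qseq u v x 0 * Real.cos (t * θ)
        + ((qseq u v x 1 - qseq u v x 0 * Real.cos θ) / Real.sin θ) * Real.sin (t * θ) :=
    fun x hx => rec_formula θ hs n _ ((keyG x).1 hx).2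
  have q_n : ∀ x : Fin m ⊕ Fin n → ℝ, (G.lapMatrix ℝ *ᵥ x = μ • x) →
      qseq u v x n = qseq u v x 0 := by
    intro x hx
    rw [q_formula x hx n (by omega), hcosn, hsinn]
    ring
  have q_n1 : ∀ x : Fin m ⊕ Fin n → ℝ, (G.lapMatrix ℝ *ᵥ x = μ • x) →
      qseq u v x (n+1) = qseq u v x 1 := by
    intro x hx
    rw [q_formula x hx (n+1) (by omega), hcosn1, hsinn1]
    field_simp
    ring
  -- forward map
  have fwd : ∀ x : Fin m ⊕ Fin n → ℝ, (G.lapMatrix ℝ *ᵥ x = μ • x) →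
      (G'.lapMatrix ℝ *ᵥ (x ∘ Sum.inl) = μ • (x ∘ Sum.inl)) := by
    intro x hx
    rw [keyG']
    intro a
    have hA := ((keyG x).1 hx).1 a
    have e1 : qseq u v x 1 = x (Sum.inl u) := by rw [← q_n1 x hx, qseq_last]
    have e2 : qseq u v x n = x (Sum.inl v) := by rw [q_n x hx, qseq_zero]
    rw [e1, e2] at hA
    simpa [Function.comp] using hA
  -- the inverse construction
  set g : (Fin m → ℝ) → (Fin n → ℝ) := fun y i =>
    y v * Real.cos ((((i : ℕ) + 1 : ℕ) : ℝ) * θ)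
      + ((y u - y v * Real.cos θ) / Real.sin θ) * Real.sin ((((i : ℕ) + 1 : ℕ) : ℝ) * θ) with hg
  have qx' : ∀ (y : Fin m → ℝ) (t : ℕ), t ≤ n + 1 →
      qseq u v (Sum.elim y (g y)) t
        = y v * Real.cos (t * θ) + ((y u - y v * Real.cos θ) / Real.sin θ) * Real.sin (t * θ) := by
    intro y t ht
    by_cases h0 : t = 0
    · subst h0
      rw [qseq_zero]
      simp
    · by_cases hle : t ≤ n
      · rw [hqmid _ t (by omega) hle]
        simp only [Sum.elim_inr, hg, Fin.val_mk]
        rw [show t - 1 + 1 = t by omega]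
      · have hte : t = n + 1 := by omega
        subst hte
        rw [qseq_last]
        simp only [Sum.elim_inl]
        rw [hcosn1, hsinn1]
        field_simp
        ring
  -- backward map
  have bwd : ∀ y : Fin m → ℝ, (G'.lapMatrix ℝ *ᵥ y = μ • y) →
      (G.lapMatrix ℝ *ᵥ (Sum.elim y (g y)) = μ • (Sum.elim y (g y))) := by
    intro y hy
    rw [keyG]
    constructor
    · intro a
      have hA := (keyG' y).1 hy a
      have e1 : qseq u v (Sum.elim y (g y)) 1 = y u := by
        rw [qx' y 1 (by omega)]
        simp only [Nat.cast_one, one_mul]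
        field_simp
        ring
      have e2 : qseq u v (Sum.elim y (g y)) n = y v := by
        rw [qx' y n (by omega), hcosn, hsinn]
        ring
      simp only [Sum.elim_inl, e1, e2]
      exact hA
    · intro t ht
      rw [qx' y t (by omega), qx' y (t+1) (by omega), qx' y (t+2) (by omega)]
      push_cast
      exact trig_rec _ _ θ t
  -- left inverse
  have linv : ∀ x : Fin m ⊕ Fin n → ℝ, (G.lapMatrix ℝ *ᵥ x = μ • x) →
      Sum.elim (x ∘ Sum.inl) (g (x ∘ Sum.inl)) = x := by
    intro x hx
    funext w
    cases w with
    | inl a => rfl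
    | inr i =>
      have hylt := i.isLt
      have hyv : (x ∘ Sum.inl) v = qseq u v x 0 := (qseq_zero u v x).symm
      have hyu : (x ∘ Sum.inl) u = qseq u v x 1 := by
        rw [Function.comp_apply, ← q_n1 x hx, qseq_last]
      rw [show Sum.elim (x ∘ Sum.inl) (g (x ∘ Sum.inl)) (Sum.inr i) = g (x ∘ Sum.inl) i from rfl]
      rw [show x (Sum.inr i) = qseq u v x ((i:ℕ)+1) from (qseq_succ u v x i).symm]
      rw [q_formula x hx ((i:ℕ)+1) (by omega)]
      simp only [hg, hyv, hyu]
  -- assembly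
  have memE : ∀ x : Fin m ⊕ Fin n → ℝ,
      x ∈ Module.End.eigenspace (Matrix.toLin' (G.lapMatrix ℝ)) μ ↔ G.lapMatrix ℝ *ᵥ x = μ • x := by
    intro x
    rw [Module.End.mem_eigenspace_iff, Matrix.toLin'_apply]
  have memE' : ∀ y : Fin m → ℝ,
      y ∈ Module.End.eigenspace (Matrix.toLin' (G'.lapMatrix ℝ)) μ ↔ G'.lapMatrix ℝ *ᵥ y = μ • y := by
    intro y
    rw [Module.End.mem_eigenspace_iff, Matrix.toLin'_apply]
  unfold mult
  refine LinearEquiv.finrank_eq ?_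
  exact {
    toFun := fun x => ⟨x.1 ∘ Sum.inl, (memE' _).2 (fwd x.1 ((memE x.1).1 x.2))⟩
    map_add' := fun a b => Subtype.ext rfl
    map_smul' := fun c a => Subtype.ext rfl
    invFun := fun y => ⟨Sum.elim y.1 (g y.1), (memE _).2 (bwd y.1 ((memE' y.1).1 y.2))⟩
    left_inv := fun x => Subtype.ext (linv x.1 ((memE x.1).1 x.2))
    right_inv := fun y => Subtype.ext (funext fun a => rfl)
  }
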